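/- Let G be a graph of order n with α'(G) = 2 and G isomorphic to K₂(0, 0; ℓ) for some ℓ ≥ 2 (so n = ℓ + 2). Then α'(G) + α'(complement of G) = (n+2)/2. -/

import Mathlib

open Finset
open scoped Classical

noncomputable section

/-- A fractional matching of a simple graph `G`: a weight on `Sym2 V` supported on the
edge set, with values in `[0,1]`, such that the total weight at each vertex is at most 1. -/
def SimpleGraph.IsFracMatching {V : Type*} [Fintype V] (G : SimpleGraph V)
    (f : Sym2 V → ℝ) : Prop :=
  (∀ e, 0 ≤ f e ∧ f e ≤ 1) ∧ (∀ e, e ∉ G.edgeSet → f e = 0) ∧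
    ∀ v : V, ∑ e ∈ G.incidenceFinset v, f e ≤ 1

/-- The total weight `f(G)` of a fractional matching. -/
def SimpleGraph.fracWeight {V : Type*} [Fintype V] (G : SimpleGraph V)
    (f : Sym2 V → ℝ) : ℝ :=
  ∑ e ∈ G.edgeFinset, f e

/-- The weight `f(v)` of a vertex: the sum over edges incident to `v`. -/
def SimpleGraph.vertexWeight {V : Type*} [Fintype V] (G : SimpleGraph V)
    (f : Sym2 V → ℝ) (v : V) : ℝ :=
  ∑ e ∈ G.incidenceFinset v, f e

/-- The fractional matching number `α'(G)`. -/
def SimpleGraph.fracNu {V : Type*} [Fintype V] (G : SimpleGraph V) : ℝ :=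
  sSup {x : ℝ | ∃ f, G.IsFracMatching f ∧ G.fracWeight f = x}

end

lemma sum_vertexWeight {V : Type*} [Fintype V] (G : SimpleGraph V) (f : Sym2 V → ℝ) :
    ∑ v, G.vertexWeight f v = 2 * G.fracWeight f := by
  classical
  simp only [SimpleGraph.vertexWeight, SimpleGraph.fracWeight]
  rw [Finset.mul_sum]
  have : ∀ v : V, ∑ e ∈ G.incidenceFinset v, f e
      = ∑ e ∈ G.edgeFinset, if v ∈ e then f e else 0 := by
    intro v
    rw [G.incidenceFinset_eq_filter v, Finset.sum_filter]
  simp_rw [this]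
  rw [Finset.sum_comm]
  refine Finset.sum_congr rfl ?_
  intro e he
  revert he
  induction e using Sym2.ind with
  | _ a b =>
    intro he
    have hadj : G.Adj a b := by rwa [SimpleGraph.mem_edgeFinset, SimpleGraph.mem_edgeSet] at he
    have hne : a ≠ b := hadj.ne
    have hfil : (Finset.univ.filter (· ∈ (s(a,b) : Sym2 V))) = {a, b} := by
      ext x; simp [Sym2.mem_iff]
    rw [← Finset.sum_filter, hfil, Finset.sum_const, Finset.card_pair hne]
    simp

theorem stmt_11 {V : Type*} [Fintype V] (G : SimpleGraph V)
    (hn : 4 ≤ Fintype.card V) (h2 : G.fracNu = 2)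
    (hiso : ∃ u v : V, u ≠ v ∧
      ∀ x y : V, G.Adj x y ↔ (x ≠ y ∧ (x = u ∨ x = v ∨ y = u ∨ y = v))) :
    G.fracNu + Gᶜ.fracNu = ((Fintype.card V : ℝ) + 2) / 2 := by
  classical
  obtain ⟨u, v, huv, hadj⟩ := hiso
  set n := Fintype.card V with hndef
  have hnR : (4:ℝ) ≤ (n:ℝ) := by exact_mod_cast hn
  have hc0 : (0:ℝ) < (n:ℝ) - 3 := by linarith
  have hcadj : ∀ x y : V, Gᶜ.Adj x y ↔ x ≠ y ∧ x ≠ u ∧ x ≠ v ∧ y ≠ u ∧ y ≠ v := by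
    intro x y
    rw [SimpleGraph.compl_adj, hadj]
    tauto
  -- weights at u and v vanish for any function
  have hvw0 : ∀ (g : Sym2 V → ℝ) (z : V), z = u ∨ z = v → Gᶜ.vertexWeight g z = 0 := by
    intro g z hz
    rw [SimpleGraph.vertexWeight]
    apply Finset.sum_eq_zero
    intro e he
    rw [SimpleGraph.mem_incidenceFinset] at he
    obtain ⟨hedge, hmem⟩ := he
    obtain ⟨y, rfl⟩ := Sym2.mem_iff_exists.mp hmem
    rw [SimpleGraph.mem_edgeSet, hcadj] at hedge
    rcases hz with rfl | rfl
    · exact (hedge.2.1 rfl).elim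
    · exact (hedge.2.2.1 rfl).elim
  -- degree of other vertices in Gᶜ
  have hdeg : ∀ w : V, w ≠ u → w ≠ v → Gᶜ.degree w = n - 3 := by
    intro w hw1 hw2
    have h1 : Gᶜ.neighborFinset w = Finset.univ \ {u, v, w} := by
      ext x
      simp only [SimpleGraph.mem_neighborFinset, hcadj, Finset.mem_sdiff,
        Finset.mem_univ, true_and, Finset.mem_insert, Finset.mem_singleton]
      constructor
      · rintro ⟨h1, h2, h3, h4, h5⟩
        push_neg
        exact ⟨h4, h5, fun h => h1 h.symm⟩
      · intro h
        push_neg at h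
        exact ⟨fun hh => h.2.2 hh.symm, hw1, hw2, h.1, h.2.1⟩
    have hcard3 : ({u, v, w} : Finset V).card = 3 := by
      rw [Finset.card_insert_of_notMem, Finset.card_insert_of_notMem,
        Finset.card_singleton]
      · simp only [Finset.mem_singleton]
        exact fun h => hw2 h.symm
      · simp only [Finset.mem_insert, Finset.mem_singleton]
        push_neg
        exact ⟨huv, fun h => hw1 h.symm⟩
    rw [SimpleGraph.degree, h1, Finset.card_sdiff_of_subset (Finset.subset_univ _),
      Finset.card_univ, hcard3]
  set c : ℝ := 1 / ((n:ℝ) - 3) with hcdef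
  set f0 : Sym2 V → ℝ := fun e => if e ∈ Gᶜ.edgeSet then c else 0 with hf0
  have hvw : ∀ x : V, Gᶜ.vertexWeight f0 x = if x = u ∨ x = v then 0 else 1 := by
    intro x
    by_cases hx : x = u ∨ x = v
    · rw [if_pos hx]
      exact hvw0 f0 x hx
    · rw [if_neg hx]
      push_neg at hx
      rw [SimpleGraph.vertexWeight]
      refine Eq.trans (Finset.sum_congr (g := fun _ => c) rfl (fun e he => ?_)) ?_
      · rw [SimpleGraph.mem_incidenceFinset] at he
        exact if_pos he.1
      · rw [Finset.sum_const, SimpleGraph.card_incidenceFinset_eq_degree, nsmul_eq_mul]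
        have h3n : 3 ≤ n := by omega
        have target : ((n - 3 : ℕ) : ℝ) * c = 1 := by
          rw [Nat.cast_sub h3n, hcdef]
          push_cast
          field_simp
        convert target using 3
        · rfl
        · convert hdeg x hx.1 hx.2
  have hmatch : Gᶜ.IsFracMatching f0 := by
    refine ⟨?_, ?_, ?_⟩
    · intro e
      by_cases he : e ∈ Gᶜ.edgeSet
      · simp only [hf0, if_pos he]
        constructor
        · positivity
        · rw [hcdef, div_le_one hc0]; linarith
      · simp only [hf0, if_neg he, le_refl, zero_le_one, and_self]
    · intro e he; exact if_neg he
    · intro x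
      show Gᶜ.vertexWeight f0 x ≤ 1
      rw [hvw x]
      split <;> norm_num
  have hweight : Gᶜ.fracWeight f0 = ((n:ℝ) - 2) / 2 := by
    have h2w := sum_vertexWeight Gᶜ f0
    have hsum : ∑ x : V, Gᶜ.vertexWeight f0 x = (n:ℝ) - 2 := by
      rw [Finset.sum_congr rfl (fun x _ => hvw x), Finset.sum_ite,
        Finset.sum_const, Finset.sum_const, smul_zero, zero_add, nsmul_eq_mul,
        mul_one]
      have hfil : (Finset.univ.filter (fun x : V => ¬(x = u ∨ x = v)))
          = Finset.univ \ {u, v} := by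
        ext x; simp
      rw [hfil, Finset.card_sdiff_of_subset (Finset.subset_univ _), Finset.card_univ,
        Finset.card_pair huv, Nat.cast_sub (by omega : 2 ≤ n)]
      norm_num
    rw [hsum] at h2w
    linarith
  have hub : ∀ g : Sym2 V → ℝ, Gᶜ.IsFracMatching g → Gᶜ.fracWeight g ≤ ((n:ℝ) - 2) / 2 := by
    intro g hg
    have h2w := sum_vertexWeight Gᶜ g
    have hsplit : ∑ x : V, Gᶜ.vertexWeight g x
        = ∑ x ∈ Finset.univ \ ({u, v} : Finset V), Gᶜ.vertexWeight g x
          + ∑ x ∈ ({u, v} : Finset V), Gᶜ.vertexWeight g x :=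
      (Finset.sum_sdiff (Finset.subset_univ _)).symm
    have hzero : ∑ x ∈ ({u, v} : Finset V), Gᶜ.vertexWeight g x = 0 := by
      apply Finset.sum_eq_zero
      intro x hx
      simp only [Finset.mem_insert, Finset.mem_singleton] at hx
      exact hvw0 g x hx
    have hbdd : ∑ x ∈ Finset.univ \ ({u, v} : Finset V), Gᶜ.vertexWeight g x
        ≤ (n:ℝ) - 2 := by
      have hle : ∀ x ∈ Finset.univ \ ({u, v} : Finset V),
          Gᶜ.vertexWeight g x ≤ 1 := fun x _ => hg.2.2 x
      calc ∑ x ∈ Finset.univ \ ({u, v} : Finset V), Gᶜ.vertexWeight g x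
          ≤ ∑ _x ∈ Finset.univ \ ({u, v} : Finset V), (1:ℝ) := Finset.sum_le_sum hle
        _ = ((Finset.univ \ ({u, v} : Finset V)).card : ℝ) := by
            rw [Finset.sum_const, nsmul_eq_mul, mul_one]
        _ ≤ (n:ℝ) - 2 := by
            rw [Finset.card_sdiff_of_subset (Finset.subset_univ _), Finset.card_univ,
              Finset.card_pair huv]
            have h2n : 2 ≤ n := by omega
            rw [Nat.cast_sub h2n]
            norm_num
    have : ∑ x : V, Gᶜ.vertexWeight g x ≤ (n:ℝ) - 2 := by
      rw [hsplit, hzero, add_zero]; exact hbdd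
    linarith
  have hnu : Gᶜ.fracNu = ((n:ℝ) - 2) / 2 := by
    rw [SimpleGraph.fracNu]
    apply le_antisymm
    · refine csSup_le ⟨Gᶜ.fracWeight f0, f0, hmatch, rfl⟩ ?_
      rintro x ⟨g, hg, rfl⟩
      exact hub g hg
    · refine le_csSup ⟨((n:ℝ) - 2) / 2, ?_⟩ ⟨f0, hmatch, hweight⟩
      rintro x ⟨g, hg, rfl⟩
      exact hub g hg
  rw [h2, hnu]
  ring
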